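/- For every integer m ≥ 1 that is a power of 3, there exists a pairwise independent set Π of permutations of {1,…,3m} with |Π| = 9m^2 − 3m. -/

import Mathlib

/-- A finite nonempty set `P` of permutations of a set of size `N ≥ 2` is *pairwise
independent* if for all `a ≠ b` and `c ≠ d`, the number of `π ∈ P` with `π a = c` and
`π b = d` equals `|P| / (N(N−1))` (stated multiplicatively to avoid division). -/
def PairwiseIndepPerms {α : Type*} [DecidableEq α] (N : ℕ) (P : Finset (Equiv.Perm α)) : Prop :=
  P.Nonempty ∧
    ∀ a b c d : α, a ≠ b → c ≠ d →
      (P.filter fun π => π a = c ∧ π b = d).card * (N * (N - 1)) = P.card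

open Finset

noncomputable def affPerm {K : Type*} [Field K] (p : Kˣ × K) : Equiv.Perm K :=
  (Equiv.mulLeft₀ (p.1 : K) p.1.ne_zero).trans (Equiv.addLeft p.2)

lemma affPerm_apply {K : Type*} [Field K] (p : Kˣ × K) (x : K) :
    affPerm p x = p.2 + p.1 * x := rfl

lemma aux {K α : Type*} [Field K] [Fintype K] [DecidableEq K] [Fintype α] [DecidableEq α]
    (N : ℕ) (e : K ≃ α) (hN : Fintype.card K = N) :
    ∃ P : Finset (Equiv.Perm α), PairwiseIndepPerms N P ∧ P.card = N * (N - 1) := by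
  classical
  have h2 : 2 ≤ N := by
    rw [← hN]; exact Fintype.one_lt_card
  set g : Kˣ × K → Equiv.Perm α := fun p => (e.symm.trans (affPerm p)).trans e with hg
  have hginj : Function.Injective g := by
    intro p q h
    have h' : ∀ x : K, p.2 + p.1 * x = q.2 + q.1 * x := by
      intro x
      have := congrArg (fun π : Equiv.Perm α => e.symm (π (e x))) h
      simpa [hg, affPerm_apply] using this
    have h0 := h' 0
    simp at h0
    have h1 := h' 1
    rw [h0] at h1
    simp at h1
    exact Prod.ext (Units.ext h1) h0
  refine ⟨univ.image g, ⟨⟨g 1, mem_image_of_mem _ (mem_univ _)⟩, ?_⟩, ?_⟩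
  · intro a b c d hab hcd
    have key : ((univ.image g).filter fun π => π a = c ∧ π b = d).card = 1 := by
      rw [Finset.filter_image, Finset.card_image_of_injective _ hginj]
      rw [Finset.card_eq_one]
      set x₁ := e.symm a; set x₂ := e.symm b; set y₁ := e.symm c; set y₂ := e.symm d
      have hx : x₁ ≠ x₂ := fun h => hab (by simpa [x₁, x₂] using congrArg e h)
      have hy : y₁ ≠ y₂ := fun h => hcd (by simpa [y₁, y₂] using congrArg e h)
      have hxs : x₁ - x₂ ≠ 0 := sub_ne_zero.mpr hx
      have hys : y₁ - y₂ ≠ 0 := sub_ne_zero.mpr hy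
      set α₀ : K := (y₁ - y₂) / (x₁ - x₂) with hα₀
      have hα₀ne : α₀ ≠ 0 := div_ne_zero hys hxs
      refine ⟨⟨Units.mk0 α₀ hα₀ne, y₁ - α₀ * x₁⟩, ?_⟩
      ext p
      simp only [mem_filter, mem_univ, true_and, mem_singleton, hg, Function.comp]
      have happ : ∀ x : K, g p (e x) = e (p.2 + p.1 * x) := by
        intro x; simp [hg, affPerm_apply]
      have hea : a = e x₁ := (e.apply_symm_apply a).symm
      have heb : b = e x₂ := (e.apply_symm_apply b).symm
      constructor
      · rintro ⟨h1, h2'⟩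
        rw [hea, happ] at h1
        rw [heb, happ] at h2'
        have e1 : p.2 + p.1 * x₁ = y₁ := by
          have := congrArg e.symm h1; simpa [y₁] using this
        have e2 : p.2 + p.1 * x₂ = y₂ := by
          have := congrArg e.symm h2'; simpa [y₂] using this
        have hp1 : (p.1 : K) = α₀ := by
          have : (p.1 : K) * (x₁ - x₂) = y₁ - y₂ := by ring_nf; linear_combination e1 - e2
          rw [hα₀, eq_div_iff hxs]
          linear_combination this
        have hp2 : p.2 = y₁ - α₀ * x₁ := by
          rw [← hp1]; linear_combination e1
        exact Prod.ext (Units.ext (by simp [hp1])) hp2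
      · rintro rfl
        constructor
        · rw [hea, happ]
          simp only [Units.val_mk0]
          rw [show y₁ - α₀ * x₁ + α₀ * x₁ = y₁ by ring]
          simp [y₁]
        · rw [heb, happ]
          have : y₁ - α₀ * x₁ + α₀ * x₂ = y₂ := by
            have : α₀ * (x₁ - x₂) = y₁ - y₂ := by
              rw [hα₀]; field_simp
            linear_combination -this
          simp only [Units.val_mk0]
          rw [this]
          simp [y₂]
    rw [key, one_mul, Finset.card_image_of_injective _ hginj, ← hN]
    simp [Fintype.card_prod, Fintype.card_units]
    cases N with
    | zero => omega
    | succ n => simp [hN]; ring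
  · rw [Finset.card_image_of_injective _ hginj]
    simp [Fintype.card_prod, Fintype.card_units, hN]
    cases N with
    | zero => omega
    | succ n => simp; ring

/-- For every integer `m ≥ 1` that is a power of `3`, there exists a pairwise
independent set `Π` of permutations of `{1,…,3m}` with `|Π| = 9m² − 3m`. -/
theorem stmt3 (m : ℕ) (hm : 1 ≤ m) (hpow : ∃ k : ℕ, m = 3 ^ k) :
    ∃ P : Finset (Equiv.Perm (Fin (3 * m))),
      PairwiseIndepPerms (3 * m) P ∧ P.card = 9 * m ^ 2 - 3 * m := by
  classical
  obtain ⟨k, rfl⟩ := hpow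
  haveI : Fact (Nat.Prime 3) := ⟨by norm_num⟩
  let K := GaloisField 3 (k + 1)
  haveI : DecidableEq K := Classical.decEq _
  haveI : Fintype K := Fintype.ofFinite K
  have hcard : Fintype.card K = 3 * 3 ^ k := by
    have := GaloisField.card 3 (k + 1) (Nat.succ_ne_zero k)
    rw [Nat.card_eq_fintype_card] at this
    rw [show Fintype.card K = Fintype.card (GaloisField 3 (k + 1)) from rfl, this]
    ring
  let e : K ≃ Fin (3 * 3 ^ k) := Fintype.equivFinOfCardEq hcard
  obtain ⟨P, hP, hc⟩ := aux (3 * 3 ^ k) e hcard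
  refine ⟨P, hP, ?_⟩
  rw [hc]
  have ht : 1 ≤ 3 ^ k := Nat.one_le_pow _ _ (by norm_num)
  have h1 : 1 ≤ 3 * 3 ^ k := by omega
  have h2 : 3 * 3 ^ k ≤ 9 * (3 ^ k) ^ 2 := by nlinarith
  zify [h1, h2]
  ring
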